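/- Assume additionally (Monotonicity) W1 ≥ W0 P-almost surely. Then the subdistribution of the untreated potential outcome among compliers is identified: for every y ∈ ℝ, E[(1 − W)·1{Y ≤ y} | Z = 0] − E[(1 − W)·1{Y ≤ y} | Z = 1] = P({Y0 ≤ y} ∩ C). -/

import Mathlib

open MeasureTheory ProbabilityTheory

/-- Conditional mean given an event: `E[U | A] := E[U · 1_A] / P(A)`. -/
noncomputable def condMean {Ω : Type*} [MeasurableSpace Ω] (P : Measure Ω)
    (U : Ω → ℝ) (A : Set Ω) : ℝ :=
  (∫ ω in A, U ω ∂P) / (P A).toReal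

lemma integrable_of_abs_le {Ω : Type*} [MeasurableSpace Ω] {P : Measure Ω}
    [IsFiniteMeasure P] {f : Ω → ℝ} {C : ℝ} (hf : Measurable f)
    (hb : ∀ ω, |f ω| ≤ C) : Integrable f P :=
  ⟨hf.aestronglyMeasurable,
    HasFiniteIntegral.of_bounded (C := C) (ae_of_all _ fun ω => by
      simpa [Real.norm_eq_abs] using hb ω)⟩

lemma setIntegral_indep {Ω : Type*} [MeasurableSpace Ω] (P : Measure Ω)
    [IsProbabilityMeasure P] (Z : Ω → ℝ) (V : Ω → ℝ × ℝ × ℝ × ℝ)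
    (hZ : Measurable Z) (hV : Measurable V) (hindep : IndepFun Z V P) (c : ℝ)
    (φ : ℝ × ℝ × ℝ × ℝ → ℝ) (hφ : Measurable φ) (hint : Integrable (φ ∘ V) P) :
    ∫ ω in {ω | Z ω = c}, φ (V ω) ∂P
      = (P {ω | Z ω = c}).toReal * ∫ ω, φ (V ω) ∂P := by
  set ψ : ℝ → ℝ := fun x => if x = c then 1 else 0 with hψdef
  have hψ : Measurable ψ :=
    Measurable.ite (measurableSet_singleton c) measurable_const measurable_const
  have hs : MeasurableSet {ω | Z ω = c} := hZ (measurableSet_singleton c)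
  have hψint : Integrable (ψ ∘ Z) P :=
    integrable_of_abs_le (hψ.comp hZ) (C := 1) (fun ω => by
      by_cases h : Z ω = c <;> simp [ψ, Function.comp, h])
  have hIndep2 : IndepFun (ψ ∘ Z) (φ ∘ V) P := hindep.comp hψ hφ
  have key : ∫ ω in {ω | Z ω = c}, φ (V ω) ∂P
      = ∫ ω, (ψ ∘ Z) ω * (φ ∘ V) ω ∂P := by
    rw [← integral_indicator hs]
    refine integral_congr_ae (ae_of_all _ fun ω => ?_)
    by_cases h : Z ω = c
    · simp [Set.indicator, ψ, Function.comp, h]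
    · simp [Set.indicator, ψ, Function.comp, h]
  have hm : ∫ ω, ψ (Z ω) * φ (V ω) ∂P
      = (∫ ω, ψ (Z ω) ∂P) * ∫ ω, φ (V ω) ∂P :=
    hIndep2.integral_mul_eq_mul_integral hψint.1 hint.1
  simp only [Function.comp_apply] at key
  rw [key, hm]
  congr 1
  have h1 : (fun ω => ψ (Z ω)) = Set.indicator {ω | Z ω = c} (fun _ => (1 : ℝ)) := by
    ext ω; by_cases h : Z ω = c <;> simp [ψ, Set.indicator, h]
  show ∫ ω, ψ (Z ω) ∂P = _
  rw [h1]; exact integral_indicator_one hs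

/-- The subdistribution of the untreated potential outcome among compliers is identified:
`E[(1 − W)·1{Y ≤ y} | Z = 0] − E[(1 − W)·1{Y ≤ y} | Z = 1] = P({Y0 ≤ y} ∩ C)`. -/
theorem untreated_subdistribution_identified
    {Ω : Type*} [MeasurableSpace Ω] (P : Measure Ω) [IsProbabilityMeasure P]
    (Z W0 W1 Y0 Y1 : Ω → ℝ)
    (hZ : Measurable Z) (hW0 : Measurable W0) (hW1 : Measurable W1)
    (hY0 : Measurable Y0) (hY1 : Measurable Y1)
    (hZbin : ∀ ω, Z ω = 0 ∨ Z ω = 1)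
    (hW0bin : ∀ ω, W0 ω = 0 ∨ W0 ω = 1)
    (hW1bin : ∀ ω, W1 ω = 0 ∨ W1 ω = 1)
    (W Y : Ω → ℝ)
    (hWdef : ∀ ω, W ω = Z ω * W1 ω + (1 - Z ω) * W0 ω)
    (hYdef : ∀ ω, Y ω = W ω * Y1 ω + (1 - W ω) * Y0 ω)
    (hindep : IndepFun Z (fun ω => (Y0 ω, Y1 ω, W0 ω, W1 ω)) P)
    (hoverlap : 0 < P {ω | Z ω = 1} ∧ P {ω | Z ω = 1} < 1)
    (hmono : ∀ᵐ ω ∂P, W0 ω ≤ W1 ω) :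
    ∀ y : ℝ,
      condMean P (fun ω => (1 - W ω) * (if Y ω ≤ y then (1 : ℝ) else 0)) {ω | Z ω = 0}
        - condMean P (fun ω => (1 - W ω) * (if Y ω ≤ y then (1 : ℝ) else 0)) {ω | Z ω = 1}
      = (P ({ω | Y0 ω ≤ y} ∩ {ω | W0 ω < W1 ω})).toReal := by
  intro y
  obtain ⟨hpos, hlt⟩ := hoverlap
  set V : Ω → ℝ × ℝ × ℝ × ℝ := fun ω => (Y0 ω, Y1 ω, W0 ω, W1 ω) with hVdef
  have hV : Measurable V := (hY0.prodMk (hY1.prodMk (hW0.prodMk hW1)))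
  set φ0 : ℝ × ℝ × ℝ × ℝ → ℝ :=
    fun p => (1 - p.2.2.1) * (if p.1 ≤ y then (1 : ℝ) else 0) with hφ0def
  set φ1 : ℝ × ℝ × ℝ × ℝ → ℝ :=
    fun p => (1 - p.2.2.2) * (if p.1 ≤ y then (1 : ℝ) else 0) with hφ1def
  have hmY : Measurable fun p : ℝ × ℝ × ℝ × ℝ => (if p.1 ≤ y then (1 : ℝ) else 0) := by
    refine Measurable.ite ?_ measurable_const measurable_const
    exact measurable_fst measurableSet_Iic
  have hφ0 : Measurable φ0 :=
    ((measurable_const.sub (measurable_fst.comp (measurable_snd.comp measurable_snd))).mul hmY)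
  have hφ1 : Measurable φ1 :=
    ((measurable_const.sub (measurable_snd.comp (measurable_snd.comp measurable_snd))).mul hmY)
  have hbin_bound : ∀ (b : ℝ), b = 0 ∨ b = 1 → ∀ (x : ℝ),
      |(1 - b) * (if x ≤ y then (1 : ℝ) else 0)| ≤ 1 := by
    rintro b (rfl | rfl) x <;> by_cases h : x ≤ y <;> simp [h]
  have hint0 : Integrable (φ0 ∘ V) P :=
    integrable_of_abs_le (hφ0.comp hV) (C := 1)
      (fun ω => hbin_bound (W0 ω) (hW0bin ω) (Y0 ω))
  have hint1 : Integrable (φ1 ∘ V) P :=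
    integrable_of_abs_le (hφ1.comp hV) (C := 1)
      (fun ω => hbin_bound (W1 ω) (hW1bin ω) (Y0 ω))
  have hs0 : MeasurableSet {ω | Z ω = (0 : ℝ)} := hZ (measurableSet_singleton 0)
  have hs1 : MeasurableSet {ω | Z ω = (1 : ℝ)} := hZ (measurableSet_singleton 1)
  -- P {Z = 0} > 0
  have hcompl : {ω | Z ω = (0 : ℝ)} = {ω | Z ω = (1 : ℝ)}ᶜ := by
    ext ω
    rcases hZbin ω with h | h <;> simp [h]
  have hP0 : P {ω | Z ω = (0 : ℝ)} = 1 - P {ω | Z ω = (1 : ℝ)} := by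
    rw [hcompl, measure_compl hs1 (measure_ne_top _ _), measure_univ]
  have hP0pos : 0 < P {ω | Z ω = (0 : ℝ)} := by
    rw [hP0]
    exact tsub_pos_of_lt hlt
  have hP0t : (P {ω | Z ω = (0 : ℝ)}).toReal ≠ 0 := by
    simp [ENNReal.toReal_eq_zero_iff, hP0pos.ne', measure_ne_top]
  have hP1t : (P {ω | Z ω = (1 : ℝ)}).toReal ≠ 0 := by
    simp [ENNReal.toReal_eq_zero_iff, hpos.ne', measure_ne_top]
  -- pointwise equalities on the events
  have hEq0 : Set.EqOn (fun ω => (1 - W ω) * (if Y ω ≤ y then (1 : ℝ) else 0))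
      (fun ω => φ0 (V ω)) {ω | Z ω = (0 : ℝ)} := by
    intro ω hω
    have hz : Z ω = 0 := hω
    have hw : W ω = W0 ω := by rw [hWdef ω, hz]; ring
    rcases hW0bin ω with h0 | h1
    · have hy : Y ω = Y0 ω := by rw [hYdef ω, hw, h0]; ring
      simp [φ0, V, hw, h0, hy]
    · simp [φ0, V, hw, h1]
  have hEq1 : Set.EqOn (fun ω => (1 - W ω) * (if Y ω ≤ y then (1 : ℝ) else 0))
      (fun ω => φ1 (V ω)) {ω | Z ω = (1 : ℝ)} := by
    intro ω hω
    have hz : Z ω = 1 := hω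
    have hw : W ω = W1 ω := by rw [hWdef ω, hz]; ring
    rcases hW1bin ω with h0 | h1
    · have hy : Y ω = Y0 ω := by rw [hYdef ω, hw, h0]; ring
      simp [φ1, V, hw, h0, hy]
    · simp [φ1, V, hw, h1]
  have hc0 : condMean P (fun ω => (1 - W ω) * (if Y ω ≤ y then (1 : ℝ) else 0))
      {ω | Z ω = (0 : ℝ)} = ∫ ω, φ0 (V ω) ∂P := by
    unfold condMean
    rw [setIntegral_congr_fun hs0 hEq0,
      setIntegral_indep P Z V hZ hV hindep 0 φ0 hφ0 hint0]
    field_simp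
  have hc1 : condMean P (fun ω => (1 - W ω) * (if Y ω ≤ y then (1 : ℝ) else 0))
      {ω | Z ω = (1 : ℝ)} = ∫ ω, φ1 (V ω) ∂P := by
    unfold condMean
    rw [setIntegral_congr_fun hs1 hEq1,
      setIntegral_indep P Z V hZ hV hindep 1 φ1 hφ1 hint1]
    field_simp
  have hsub : ∫ ω, φ0 (V ω) ∂P - ∫ ω, φ1 (V ω) ∂P
      = ∫ ω, (φ0 (V ω) - φ1 (V ω)) ∂P := (integral_sub hint0 hint1).symm
  rw [hc0, hc1, hsub]
  have hS : MeasurableSet ({ω | Y0 ω ≤ y} ∩ {ω | W0 ω < W1 ω}) :=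
    (hY0 measurableSet_Iic).inter (measurableSet_lt hW0 hW1)
  rw [← measureReal_def, ← integral_indicator_one hS]
  refine integral_congr_ae ?_
  filter_upwards [hmono] with ω hωm
  rcases hW0bin ω with h0 | h1
  · rcases hW1bin ω with g0 | g1
    · have : ¬ W0 ω < W1 ω := by rw [h0, g0]; norm_num
      simp [φ0, φ1, V, Set.indicator, h0, g0, this, Set.mem_inter_iff]
    · have : W0 ω < W1 ω := by rw [h0, g1]; norm_num
      by_cases hy : Y0 ω ≤ y
      · simp [φ0, φ1, V, Set.indicator, h0, g1, this, hy, Set.mem_inter_iff]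
      · simp [φ0, φ1, V, Set.indicator, h0, g1, this, hy, Set.mem_inter_iff]
  · have g1 : W1 ω = 1 := by
      rcases hW1bin ω with g | g
      · exfalso; rw [h1, g] at hωm; linarith
      · exact g
    have : ¬ W0 ω < W1 ω := by rw [h1, g1]; norm_num
    simp [φ0, φ1, V, Set.indicator, h1, g1, this, Set.mem_inter_iff]
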